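/- Let K be a number field with ring of integers 𝒪_K, let I ⊆ 𝒪_K be a nonzero ideal, and let n be the positive integer with I ∩ ℤ = nℤ. Let χ : (𝒪_K/I)ˣ → ℂˣ be a group homomorphism with χ(-1) = 1, and let P_χ = Γ(𝒪_K/I, ker χ) be the Paley graph associated with χ, where ker χ = { a ∈ (𝒪_K/I)ˣ : χ(a) = 1 } is viewed as a subset of 𝒪_K/I. Then P_χ is an integral graph if and only if the induced character of (ℤ/n)ˣ is trivial, i.e., χ(ι(u)) = 1 for every u ∈ (ℤ/n)ˣ, where ι : ℤ/n → 𝒪_K/I is the canonical ring homomorphism. -/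

import Mathlib

set_option synthInstance.maxHeartbeats 1000000
set_option maxHeartbeats 1000000

open NumberField

/-- Adjacency matrix (over ℂ) of the Cayley graph Γ(R,S):
`a` and `b` are adjacent iff `b - a ∈ S`. -/
noncomputable def cayleyAdj {R : Type*} [Ring R] (S : Set R) : Matrix R R ℂ :=
  fun a b => S.indicator (fun _ => (1 : ℂ)) (b - a)

/-- The Cayley graph Γ(R,S) is integral: every eigenvalue of its adjacency matrix
is a (rational) integer. -/
def IsIntegralCayley {R : Type*} [Ring R] [Fintype R] (S : Set R) : Prop :=
  letI := Classical.decEq R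
  spectrum ℂ (cayleyAdj S) ⊆ Set.range ((↑) : ℤ → ℂ)

section AuxLemmas

open Polynomial
section Spectrum

variable {R : Type*} [Ring R] [Fintype R]

/-- eigenvalue attached to an additive character -/
noncomputable def cayLam (S : Set R) (ψ : AddChar R ℂ) : ℂ := ∑ a : R, S.indicator ⇑ψ a

theorem cayley_spectrum [DecidableEq R] (S : Set R) :
    spectrum ℂ (cayleyAdj S) = Set.range (cayLam S) := by
  classical
  rw [← AlgEquiv.spectrum_eq (Matrix.toLinAlgEquiv' : Matrix R R ℂ ≃ₐ[ℂ] _) (cayleyAdj S)]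
  set f := Matrix.toLinAlgEquiv' (cayleyAdj S) with hf
  have key : ∀ ψ : AddChar R ℂ, f ⇑ψ = cayLam S ψ • ⇑ψ := by
    intro ψ
    funext a
    rw [hf, Matrix.toLinAlgEquiv'_apply]
    show ∑ b : R, cayleyAdj S a b * ψ b = _
    have h1 : ∀ c : R, S.indicator (fun _ => (1:ℂ)) c * ψ (a + c) = ψ a * S.indicator ⇑ψ c := by
      intro c
      by_cases hc : c ∈ S <;> simp [Set.indicator_apply, hc, AddChar.map_add_eq_mul]
    calc ∑ b : R, cayleyAdj S a b * ψ b
        = ∑ c : R, S.indicator (fun _ => (1:ℂ)) c * ψ (a + c) := by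
          refine (Fintype.sum_equiv (Equiv.addLeft a) _ _ ?_).symm
          intro c
          simp [cayleyAdj, Equiv.addLeft]
      _ = ∑ c : R, ψ a * S.indicator ⇑ψ c := by simp only [h1]
      _ = cayLam S ψ • ⇑ψ a := by
          rw [← Finset.mul_sum, cayLam]
          simp [mul_comm]
  ext μ
  constructor
  · intro hμ
    by_contra hr
    refine spectrum.mem_iff.mp hμ ?_
    have hne : ∀ ψ : AddChar R ℂ, μ - cayLam S ψ ≠ 0 := by
      intro ψ h
      exact hr ⟨ψ, by linear_combination -h⟩
    set B := AddChar.complexBasis R with hB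
    set g := B.constr ℂ (fun ψ => (μ - cayLam S ψ)⁻¹ • (B ψ)) with hg
    have hdiag : ∀ ψ : AddChar R ℂ,
        (algebraMap ℂ (Module.End ℂ (R → ℂ)) μ - f) (B ψ) = (μ - cayLam S ψ) • B ψ := by
      intro ψ
      rw [LinearMap.sub_apply, Module.algebraMap_end_apply, sub_smul]
      congr 1
      rw [show (B ψ : R → ℂ) = ⇑ψ from AddChar.complexBasis_apply ψ, key]
    have h1 : (algebraMap ℂ (Module.End ℂ (R → ℂ)) μ - f) * g = 1 := by
      refine Module.Basis.ext B fun ψ => ?_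
      rw [Module.End.mul_apply, hg, Module.Basis.constr_basis, map_smul, hdiag, smul_smul,
        inv_mul_cancel₀ (hne ψ), one_smul, Module.End.one_apply]
    have h2 : g * (algebraMap ℂ (Module.End ℂ (R → ℂ)) μ - f) = 1 := by
      refine Module.Basis.ext B fun ψ => ?_
      rw [Module.End.mul_apply, hdiag, map_smul, hg, Module.Basis.constr_basis, smul_smul,
        mul_inv_cancel₀ (hne ψ), one_smul, Module.End.one_apply]
    exact ⟨⟨_, g, h1, h2⟩, rfl⟩
  · rintro ⟨ψ, rfl⟩
    rw [spectrum.mem_iff]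
    intro hu
    obtain ⟨v, hv⟩ := hu
    have h0 : (algebraMap ℂ (Module.End ℂ (R → ℂ)) (cayLam S ψ) - f) ⇑ψ = 0 := by
      rw [LinearMap.sub_apply, Module.algebraMap_end_apply, key, sub_self]
    have : (⇑ψ : R → ℂ) = 0 := by
      calc (⇑ψ : R → ℂ) = ((↑v⁻¹ * ↑v : Module.End ℂ (R → ℂ))) ⇑ψ := by
            rw [Units.inv_mul, Module.End.one_apply]
        _ = (↑v⁻¹ : Module.End ℂ (R → ℂ)) ((↑v : Module.End ℂ (R → ℂ)) ⇑ψ) := rfl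
        _ = 0 := by rw [hv, h0, map_zero]
    exact AddChar.coe_ne_zero ψ this

theorem isIntegralCayley_iff (S : Set R) :
    IsIntegralCayley S ↔ ∀ ψ : AddChar R ℂ, cayLam S ψ ∈ Set.range ((↑) : ℤ → ℂ) := by
  letI := Classical.decEq R
  show spectrum ℂ (cayleyAdj S) ⊆ _ ↔ _
  rw [cayley_spectrum, Set.range_subset_iff]

end Spectrum


theorem finset_eq_of_charSums_eq {G : Type*} [AddCommGroup G] [Fintype G] [DecidableEq G]
    {A B : Finset G} (h : ∀ ψ : AddChar G ℂ, ∑ a ∈ A, ψ a = ∑ b ∈ B, ψ b) : A = B := by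
  set L1 : (G → ℂ) →ₗ[ℂ] ℂ := ∑ a ∈ A, LinearMap.proj a with hL1
  set L2 : (G → ℂ) →ₗ[ℂ] ℂ := ∑ b ∈ B, LinearMap.proj b with hL2
  have hL : L1 = L2 := by
    refine Module.Basis.ext (AddChar.complexBasis G) fun ψ => ?_
    rw [hL1, hL2]
    simpa [LinearMap.sum_apply, LinearMap.proj_apply] using h ψ
  ext x
  have := congrArg (fun (L : (G → ℂ) →ₗ[ℂ] ℂ) => L (Pi.single x 1)) hL
  simp only [hL1, hL2, LinearMap.sum_apply, LinearMap.proj_apply] at this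
  have e1 : ∀ (C : Finset G), ∑ a ∈ C, Pi.single (M := fun _ => ℂ) x 1 a
      = if x ∈ C then (1:ℂ) else 0 := by
    intro C
    rw [← Finset.sum_ite_eq' C x (fun _ => (1:ℂ))]
    refine Finset.sum_congr rfl fun a _ => ?_
    simp [Pi.single_apply]
  rw [e1, e1] at this
  constructor
  · intro hx
    by_contra hxB
    rw [if_pos hx, if_neg hxB] at this
    exact one_ne_zero this
  · intro hx
    by_contra hxA
    rw [if_neg hxA, if_pos hx] at this
    exact one_ne_zero this.symm

/-- indicator sum over the whole group as a filtered Finset sum -/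
theorem indicator_sum_eq {G : Type*} [Fintype G] (S : Set G) [DecidablePred (· ∈ S)]
    (g : G → ℂ) : ∑ a : G, S.indicator g a = ∑ a ∈ Finset.univ.filter (· ∈ S), g a := by
  rw [Finset.sum_filter]
  refine Finset.sum_congr rfl fun a _ => ?_
  simp [Set.indicator_apply]



theorem sum_pow_eq_of_int {ι : Type*} {F : Finset ι} {c : ι → ℂ} {n : ℕ} (hn : 0 < n)
    (h1 : ∀ s : ι, c s ^ n = 1) {k : ℕ} (hk : Nat.Coprime k n) {m : ℤ}
    (hm : ∑ s ∈ F, c s = (m : ℂ)) : ∑ s ∈ F, c s ^ k = ∑ s ∈ F, c s := by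
  haveI : NeZero n := ⟨hn.ne'⟩
  set ζ : ℂ := Complex.exp (2 * Real.pi * Complex.I / n) with hζdef
  have hζ : IsPrimitiveRoot ζ n := Complex.isPrimitiveRoot_exp n hn.ne'
  choose a ha1 ha2 using fun s : ι => hζ.eq_pow_of_pow_eq_one (h1 s)
  set P : Polynomial ℚ := ∑ s ∈ F, Polynomial.X ^ (a s) with hP
  have hPζ : Polynomial.aeval ζ P = (m : ℂ) := by
    rw [← hm, hP]
    simp [ha2]
  have hroot : Polynomial.aeval ζ (P - Polynomial.C (m : ℚ)) = 0 := by
    simp [hPζ]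
  obtain ⟨q, hq⟩ := minpoly.dvd ℚ ζ hroot
  have hkprim : IsPrimitiveRoot (ζ ^ k) n := hζ.pow_of_coprime k hk
  have hzero : Polynomial.aeval (ζ ^ k) (minpoly ℚ ζ) = 0 := by
    rw [← Polynomial.cyclotomic_eq_minpoly_rat hζ hn]
    simpa [Polynomial.aeval_def, Polynomial.eval₂_eq_eval_map, Polynomial.map_cyclotomic]
      using hkprim.isRoot_cyclotomic hn
  have hzk : Polynomial.aeval (ζ ^ k) (P - Polynomial.C (m : ℚ)) = 0 := by
    rw [hq, map_mul, hzero, zero_mul]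
  have hPk : Polynomial.aeval (ζ ^ k) P = (m : ℂ) := by
    have := hzk
    rw [map_sub, sub_eq_zero] at this
    simpa using this
  calc ∑ s ∈ F, c s ^ k = Polynomial.aeval (ζ ^ k) P := by
        rw [hP]
        simp only [map_sum, map_pow, Polynomial.aeval_X]
        refine Finset.sum_congr rfl fun s _ => ?_
        rw [← ha2 s, ← pow_mul, ← pow_mul, mul_comm]
    _ = ∑ s ∈ F, c s := by rw [hPk, hm]

theorem sum_mem_int_of_conj_invariant {ι : Type*} {F : Finset ι} {c : ι → ℂ} {n : ℕ} (hn : 0 < n)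
    (h1 : ∀ s : ι, c s ^ n = 1)
    (hinv : ∀ i : ℕ, Nat.Coprime i n → ∑ s ∈ F, c s ^ i = ∑ s ∈ F, c s) :
    ∑ s ∈ F, c s ∈ Set.range ((↑) : ℤ → ℂ) := by
  haveI : NeZero n := ⟨hn.ne'⟩
  set n' : ℕ+ := ⟨n, hn⟩ with hn'
  set L := CyclotomicField n ℚ with hL
  haveI : IsCyclotomicExtension {n} ℚ L :=
    CyclotomicField.isCyclotomicExtension n ℚ
  set ζ' : L := IsCyclotomicExtension.zeta n ℚ L with hζ'def
  have hζ' : IsPrimitiveRoot ζ' n := IsCyclotomicExtension.zeta_spec n ℚ L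
  haveI : FiniteDimensional ℚ L := IsCyclotomicExtension.finiteDimensional {n} ℚ L
  haveI : IsGalois ℚ L := IsCyclotomicExtension.isGalois {n} ℚ L
  haveI : Algebra.IsAlgebraic ℚ L := Algebra.IsAlgebraic.of_finite ℚ L
  let φ : L →ₐ[ℚ] ℂ := IsAlgClosed.lift
  have hφinj : Function.Injective φ := φ.toRingHom.injective
  have hζ : IsPrimitiveRoot (φ ζ') n := hζ'.map_of_injective hφinj
  choose a ha1 ha2 using fun s : ι => hζ.eq_pow_of_pow_eq_one (h1 s)
  set x : L := ∑ s ∈ F, ζ' ^ (a s) with hx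
  have hφx : φ x = ∑ s ∈ F, c s := by
    rw [hx]
    simp [ha2]
  have hfix : ∀ σ : L ≃ₐ[ℚ] L, σ x = x := by
    intro σ
    have hσζ : IsPrimitiveRoot (σ ζ') n := hζ'.map_of_injective σ.injective
    obtain ⟨i, hi, hζi⟩ := hζ'.eq_pow_of_pow_eq_one hσζ.pow_eq_one
    have hcop : Nat.Coprime i n := (hζ'.pow_iff_coprime hn i).mp (hζi ▸ hσζ)
    apply hφinj
    rw [hφx]
    have : σ x = ∑ s ∈ F, (ζ' ^ i) ^ (a s) := by
      rw [hx, map_sum]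
      simp [hζi]
    rw [this, map_sum]
    calc ∑ s ∈ F, φ ((ζ' ^ i) ^ a s) = ∑ s ∈ F, c s ^ i := by
          refine Finset.sum_congr rfl fun s _ => ?_
          rw [← ha2 s, map_pow, map_pow, ← pow_mul, ← pow_mul, mul_comm]
      _ = ∑ s ∈ F, c s := hinv i hcop
  have hff : IntermediateField.fixedField (⊤ : Subgroup (L ≃ₐ[ℚ] L)) = ⊥ := by
    have h2 : (⊤ : Subgroup (L ≃ₐ[ℚ] L)) ≤ IntermediateField.fixingSubgroup
        (⊥ : IntermediateField ℚ L) := (IntermediateField.le_iff_le _ _).mp bot_le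
    have h3 : IntermediateField.fixingSubgroup (⊥ : IntermediateField ℚ L) = ⊤ :=
      le_antisymm le_top h2
    rw [← h3, IsGalois.fixedField_fixingSubgroup]
  have hxmem : x ∈ IntermediateField.fixedField (⊤ : Subgroup (L ≃ₐ[ℚ] L)) := by
    intro σ
    exact hfix σ.1
  rw [hff, IntermediateField.mem_bot] at hxmem
  obtain ⟨q, hq⟩ := hxmem
  have hζint : ζ' ∈ integralClosure ℤ L := by
    refine ⟨Polynomial.X ^ n - Polynomial.C 1, Polynomial.monic_X_pow_sub_C 1 hn.ne', ?_⟩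
    simp [hζ'.pow_eq_one]
  have hxint : IsIntegral ℤ x := by
    have : x ∈ integralClosure ℤ L := by
      rw [hx]
      exact Subalgebra.sum_mem _ fun s _ => Subalgebra.pow_mem _ hζint _
    exact this
  have hqint : IsIntegral ℤ q := by
    rw [← isIntegral_algebraMap_iff (algebraMap ℚ L).injective, hq]
    exact hxint
  obtain ⟨z, hz⟩ := IsIntegrallyClosed.isIntegral_iff.mp hqint
  refine ⟨z, ?_⟩
  rw [← hφx, ← hq, AlgHom.commutes]
  rw [← hz]
  push_cast
  rfl

end AuxLemmas

/-- Let `K` be a number field, `I ⊆ 𝒪_K` a nonzero ideal with `I ∩ ℤ = nℤ`, and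
`χ : (𝒪_K/I)ˣ → ℂˣ` a character with `χ(-1) = 1`. The Paley graph
`P_χ = Γ(𝒪_K/I, ker χ)` is integral iff the induced character of `(ZMod n)ˣ` is trivial,
i.e. `χ (ι u) = 1` for every unit `u` of `ZMod n`, where `ι : ZMod n →+* 𝒪_K/I` is the
canonical ring homomorphism (characterized by compatibility with `ℤ → 𝒪_K/I`). -/
theorem paley_integral_iff (K : Type*) [Field K] [NumberField K]
    (I : Ideal (𝓞 K)) (hI : I ≠ ⊥) [Fintype ((𝓞 K) ⧸ I)]
    (n : ℕ) (hn : 0 < n)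
    (hnI : Ideal.comap (algebraMap ℤ (𝓞 K)) I = Ideal.span {(n : ℤ)})
    (χ : ((𝓞 K) ⧸ I)ˣ →* ℂˣ) (hχ : χ (-1) = 1)
    (ι : ZMod n →+* ((𝓞 K) ⧸ I)) (hι : ∀ k : ℤ, ι ((k : ℤ) : ZMod n) = ((k : ℤ) : (𝓞 K) ⧸ I)) :
    IsIntegralCayley ((fun u : ((𝓞 K) ⧸ I)ˣ => (u : (𝓞 K) ⧸ I)) '' {u | χ u = 1}) ↔
      ∀ u : (ZMod n)ˣ, χ (Units.map (ι : ZMod n →* ((𝓞 K) ⧸ I)) u) = 1 := by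
  classical
  haveI : NeZero n := ⟨hn.ne'⟩
  set S : Set ((𝓞 K) ⧸ I) := (fun u : ((𝓞 K) ⧸ I)ˣ => (u : (𝓞 K) ⧸ I)) '' {u | χ u = 1}
    with hSdef
  set F : Finset ((𝓞 K) ⧸ I) := Finset.univ.filter (· ∈ S) with hF
  have hn0 : ((n : ℕ) : (𝓞 K) ⧸ I) = 0 := by
    have h2 : algebraMap ℤ (𝓞 K) (n : ℤ) ∈ I := by
      have h1 : (n : ℤ) ∈ Ideal.comap (algebraMap ℤ (𝓞 K)) I := by
        rw [hnI]; exact Ideal.mem_span_singleton_self _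
      exact h1
    have h3 : Ideal.Quotient.mk I (algebraMap ℤ (𝓞 K) (n : ℤ)) = 0 :=
      Ideal.Quotient.eq_zero_iff_mem.mpr h2
    rw [map_natCast (algebraMap ℤ (𝓞 K)) n, map_natCast] at h3
    exact h3
  have hpow : ∀ (ψ : AddChar ((𝓞 K) ⧸ I) ℂ) (s : (𝓞 K) ⧸ I), ψ s ^ n = 1 := by
    intro ψ s
    rw [← AddChar.map_nsmul_eq_pow, nsmul_eq_mul, hn0, zero_mul, AddChar.map_zero_eq_one]
  have hιk : ∀ i : ℕ, ι ((i : ℕ) : ZMod n) = ((i : ℕ) : (𝓞 K) ⧸ I) := by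
    intro i
    have := hι (i : ℤ)
    push_cast at this
    exact this
  have hFsum : ∀ ψ : AddChar ((𝓞 K) ⧸ I) ℂ, cayLam S ψ = ∑ s ∈ F, ψ s := by
    intro ψ
    exact indicator_sum_eq S ⇑ψ
  have hmem : ∀ (v : ((𝓞 K) ⧸ I)ˣ), χ v = 1 → ∀ s ∈ F, (v : (𝓞 K) ⧸ I) * s ∈ F := by
    intro v hv s hs
    simp only [hF, Finset.mem_filter, Finset.mem_univ, true_and] at hs ⊢
    obtain ⟨w, hw, rfl⟩ := hs
    have hw' : χ w = 1 := hw
    exact ⟨v * w, show χ (v * w) = 1 by rw [map_mul, hv, hw', one_mul], rfl⟩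
  rw [isIntegralCayley_iff]
  constructor
  · intro hInt u
    set k : ℕ := (u : ZMod n).val with hk
    have hcop : Nat.Coprime k n := ZMod.val_coe_unit_coprime u
    set c : ((𝓞 K) ⧸ I)ˣ := Units.map (ι : ZMod n →* (𝓞 K) ⧸ I) u with hcdef
    have hck : (c : (𝓞 K) ⧸ I) = ((k : ℕ) : (𝓞 K) ⧸ I) := by
      rw [hcdef, Units.coe_map]
      show ι (u : ZMod n) = _
      conv_lhs => rw [show ((u : ZMod n)) = (((u : ZMod n).val : ℕ) : ZMod n) from
        (ZMod.natCast_rightInverse _).symm]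
      exact hιk _
    have hsum : ∀ ψ : AddChar ((𝓞 K) ⧸ I) ℂ, ∑ s ∈ F, ψ s ^ k = ∑ s ∈ F, ψ s := by
      intro ψ
      obtain ⟨m, hm⟩ := hInt ψ
      rw [hFsum ψ] at hm
      exact sum_pow_eq_of_int hn (hpow ψ) hcop hm.symm
    have himg : ∀ ψ : AddChar ((𝓞 K) ⧸ I) ℂ,
        ∑ t ∈ F.image (fun s => (c : (𝓞 K) ⧸ I) * s), ψ t = ∑ s ∈ F, ψ s := by
      intro ψ
      rw [Finset.sum_image (fun a _ b _ h => c.isUnit.mul_right_injective h)]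
      calc ∑ s ∈ F, ψ ((c : (𝓞 K) ⧸ I) * s) = ∑ s ∈ F, ψ s ^ k := by
            refine Finset.sum_congr rfl fun s _ => ?_
            rw [hck, ← nsmul_eq_mul, AddChar.map_nsmul_eq_pow]
        _ = _ := hsum ψ
    have hFeq : F.image (fun s => (c : (𝓞 K) ⧸ I) * s) = F := finset_eq_of_charSums_eq himg
    have h1F : (1 : (𝓞 K) ⧸ I) ∈ F := by
      simp only [hF, Finset.mem_filter, Finset.mem_univ, true_and]
      exact ⟨1, map_one χ, rfl⟩
    have hcF : (c : (𝓞 K) ⧸ I) ∈ F := by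
      rw [← hFeq]
      have := Finset.mem_image_of_mem (fun s => (c : (𝓞 K) ⧸ I) * s) h1F
      simpa using this
    have hcS : (c : (𝓞 K) ⧸ I) ∈ S := by
      simpa only [hF, Finset.mem_filter, Finset.mem_univ, true_and] using hcF
    obtain ⟨v, hv, hveq⟩ := hcS
    have hvc : v = c := Units.ext hveq
    show χ c = 1
    rw [← hvc]
    exact hv
  · intro htriv ψ
    rw [hFsum ψ]
    apply sum_mem_int_of_conj_invariant hn (hpow ψ)
    intro i hcop
    set ci : ((𝓞 K) ⧸ I)ˣ := Units.map (ι : ZMod n →* (𝓞 K) ⧸ I) (ZMod.unitOfCoprime i hcop)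
      with hcidef
    have hcii : (ci : (𝓞 K) ⧸ I) = ((i : ℕ) : (𝓞 K) ⧸ I) := by
      rw [hcidef, Units.coe_map]
      show ι _ = _
      rw [ZMod.coe_unitOfCoprime]
      exact hιk i
    have hχci : χ ci = 1 := htriv _
    have hχci' : χ ci⁻¹ = 1 := by rw [map_inv, hχci, inv_one]
    calc ∑ s ∈ F, ψ s ^ i = ∑ s ∈ F, ψ ((ci : (𝓞 K) ⧸ I) * s) := by
          refine Finset.sum_congr rfl fun s _ => ?_
          rw [hcii, ← nsmul_eq_mul, AddChar.map_nsmul_eq_pow]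
      _ = ∑ s ∈ F, ψ s := by
          refine Finset.sum_nbij' (fun s => (ci : (𝓞 K) ⧸ I) * s)
            (fun t => ((ci⁻¹ : ((𝓞 K) ⧸ I)ˣ) : (𝓞 K) ⧸ I) * t)
            (hmem ci hχci) (hmem ci⁻¹ hχci')
            (fun a _ => ?_) (fun a _ => ?_) (fun a _ => rfl)
          · show ((ci⁻¹ : ((𝓞 K) ⧸ I)ˣ) : (𝓞 K) ⧸ I) * ((ci : (𝓞 K) ⧸ I) * a) = a
            rw [← mul_assoc, Units.inv_mul, one_mul]
          · show (ci : (𝓞 K) ⧸ I) * (((ci⁻¹ : ((𝓞 K) ⧸ I)ˣ) : (𝓞 K) ⧸ I) * a) = a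
            rw [← mul_assoc, Units.mul_inv, one_mul]
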